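/- Define γ_{k,n}^α for integers α with α+n ∈ ℤ, by γ_{k,0}^α = Γ(k+α+1)/k! and γ_{k,n}^α = (1/2)·(γ_{k,n−1}^{α+1} + γ_{k−1,n−1}^{α+1}) for n ≥ 1 (with γ_{k,n}^α = 0 for k < 0). Then for all k, n ∈ ℕ₀, γ_{k,n}^{−n} = 2^{−n}·Σ_{ν=0}^{min(k,n)} C(n,ν), where C(n,ν) is the binomial coefficient. -/

import Mathlib

open Finset

/-- The normalization constants `γ_{k,n}^α`, with `γ_{k,0}^α = Γ(k+α+1)/k!`,
`γ_{k,n}^α = (γ_{k,n-1}^{α+1} + γ_{k-1,n-1}^{α+1})/2`, and `γ_{k,n}^α = 0` for `k < 0`. -/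
noncomputable def lagGamma : ℤ → ℤ → ℕ → ℝ
  | α, k, 0 => if k < 0 then 0 else Real.Gamma ((k : ℝ) + (α : ℝ) + 1) / (k.toNat.factorial : ℝ)
  | α, k, (n + 1) =>
      if k < 0 then 0
      else (lagGamma (α + 1) k n + lagGamma (α + 1) (k - 1) n) / 2

lemma lagGamma_neg (α k : ℤ) (n : ℕ) (hk : k < 0) : lagGamma α k n = 0 := by
  cases n <;> simp [lagGamma, hk]

lemma choose_sum (n m : ℕ) :
    ∑ ν ∈ range (m + 1), ((n + 1).choose ν : ℝ)
      = ∑ ν ∈ range (m + 1), (n.choose ν : ℝ) + ∑ ν ∈ range m, (n.choose ν : ℝ) := by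
  induction m with
  | zero => simp
  | succ m ih =>
    rw [sum_range_succ, ih, sum_range_succ (f := fun ν => ((n:ℕ).choose ν : ℝ)) (m + 1)]
    have : ((n + 1).choose (m + 1) : ℝ) = (n.choose m : ℝ) + (n.choose (m + 1) : ℝ) := by
      rw [Nat.choose_succ_succ]; push_cast; ring
    rw [this, sum_range_succ (f := fun ν => ((n:ℕ).choose ν : ℝ)) m]
    ring

lemma key (n : ℕ) : ∀ m : ℕ, lagGamma (-(n : ℤ)) (m : ℤ) n
      = (1 / 2 ^ n) * ∑ ν ∈ Finset.range (min m n + 1), (n.choose ν : ℝ) := by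
  induction n with
  | zero =>
    intro m
    simp [lagGamma, Real.Gamma_nat_eq_factorial, Nat.factorial_ne_zero]
  | succ n ih =>
    intro m
    have h1 : (-(↑(n+1) : ℤ)) + 1 = -(n : ℤ) := by push_cast; ring
    rw [show (n+1 : ℕ) = n + 1 from rfl]
    have hm0 : ¬ ((m : ℤ) < 0) := by omega
    rw [lagGamma, if_neg hm0, h1]
    cases m with
    | zero =>
      have h0 := ih 0
      simp only [Nat.cast_zero] at h0 ⊢
      rw [show (0:ℤ) - 1 = -1 by norm_num, lagGamma_neg _ _ _ (by norm_num : (-1:ℤ) < 0), h0]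
      simp [pow_succ]
      ring
    | succ m =>
      have h2 : ((m + 1 : ℕ) : ℤ) - 1 = (m : ℤ) := by push_cast; ring
      rw [h2, ih, ih]
      have hsum : ∑ ν ∈ range (min (m + 1) (n + 1) + 1), ((n + 1).choose ν : ℝ)
          = ∑ ν ∈ range (min (m + 1) n + 1), (n.choose ν : ℝ)
            + ∑ ν ∈ range (min m n + 1), (n.choose ν : ℝ) := by
        rw [choose_sum]
        rcases le_or_gt (m + 1) n with h | h
        · rw [Nat.min_eq_left (show m + 1 ≤ n + 1 by omega),
            Nat.min_eq_left (show m + 1 ≤ n by omega),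
            Nat.min_eq_left (show m ≤ n by omega)]
        · have hm : n ≤ m := Nat.lt_succ_iff.mp h
          rw [Nat.min_eq_right (show n + 1 ≤ m + 1 by omega),
            Nat.min_eq_right (show n ≤ m + 1 by omega),
            Nat.min_eq_right (show n ≤ m by omega)]
          rw [sum_range_succ (f := fun ν => ((n:ℕ).choose ν : ℝ)) (n+1)]
          simp
      rw [hsum, pow_succ]
      ring

theorem lagGamma_neg_n (k n : ℕ) :
    lagGamma (-(n : ℤ)) (k : ℤ) n
      = (1 / 2 ^ n) * ∑ ν ∈ Finset.range (min k n + 1), (n.choose ν : ℝ) := by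
  exact key n k
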